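/- arXiv:0910.4785 — 4 statements merged into one kernel-verified Lean document; each statement's English description precedes it below -/
import Mathlib

section
/- Let v : [0,∞) → ℝ be differentiable and satisfy the ODE √(g¹¹)(1−v²)v' + (1−v²)F₋(r,v) + θ₋(r) = 0 on (0,∞), where θ₋(r) > 0 for all r > 0 and F₋ is continuous. If |v(0)| < 1, then −1 < v(r) < 1 for all r ≥ 0. -/
/-- A priori bound −1 < v < 1 for solutions of the spherically symmetric
generalized Jang equation `√(g¹¹)(1−v²)v' + (1−v²)F₋(r,v) + θ₋(r) = 0` with `θ₋ > 0`
on `(0,∞)` and `|v(0)| < 1`. -/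
theorem jang_a_priori_bound
    (g11inv θm : ℝ → ℝ) (F : ℝ → ℝ → ℝ) (v : ℝ → ℝ)
    (hgcont : Continuous g11inv) (hgpos : ∀ r, 0 < g11inv r)
    (hθcont : ContinuousOn θm (Set.Ioi (0 : ℝ)))
    (hθpos : ∀ r > (0 : ℝ), 0 < θm r)
    (hFcont : Continuous (Function.uncurry F))
    (hv : Differentiable ℝ v)
    (hode : ∀ r > (0 : ℝ),
      Real.sqrt (g11inv r) * (1 - v r ^ 2) * deriv v r
        + (1 - v r ^ 2) * F r (v r) + θm r = 0)
    (h0 : |v 0| < 1) :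
    ∀ r ≥ (0 : ℝ), -1 < v r ∧ v r < 1 := by
  have key : ∀ s > (0 : ℝ), v s ^ 2 ≠ 1 := by
    intro s hs h
    have h1 : (1 : ℝ) - v s ^ 2 = 0 := by rw [h]; ring
    have := hode s hs
    rw [h1] at this
    simp at this
    exact (hθpos s hs).ne' this
  have h0' : v 0 ^ 2 < 1 := by
    have := (sq_lt_one_iff_abs_lt_one (a := v 0)).mpr h0
    simpa using this
  intro r hr
  have hcont : ContinuousOn (fun t => v t ^ 2) (Set.Icc 0 r) :=
    (hv.continuous.pow 2).continuousOn
  by_contra h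
  have hr2 : 1 ≤ v r ^ 2 := by
    by_contra h2
    push_neg at h2
    exact h (abs_lt.mp ((sq_lt_one_iff_abs_lt_one (a := v r)).mp h2))
  have := intermediate_value_Icc hr hcont
  have hmem : (1 : ℝ) ∈ Set.Icc (v 0 ^ 2) (v r ^ 2) := ⟨h0'.le, hr2⟩
  obtain ⟨s, hs, hvs⟩ := this hmem
  have hspos : 0 < s := by
    rcases hs.1.lt_or_eq with h' | h'
    · exact h'
    · rw [← h'] at hvs; simp only [] at hvs; rw [hvs] at h0'; exact absurd h0' (lt_irrefl 1)
  exact key s hspos (by simpa using hvs)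
end

section
/- Let ρ, m be as in the spherically symmetric Hawking mass setup with m(s) = ½ρ(s)(1 − ρ_s(s)²), ρ_s(0) = 0 (so that S₀ is a minimal surface), and suppose the scalar curvature R̄ of ḡ = ds² + ρ² dΩ² satisfies R̄ ≥ 0 and ρ_s ≥ 0 on (0,∞). If m(s) → M as s → ∞, then M ≥ ρ(0)/2 = √(A/(16π)), where A = 4πρ(0)² is the area of the sphere s = 0. -/
open Filter

/-- Monotonicity of the Hawking mass in spherical symmetry with `R̄ ≥ 0`,
`ρ_s ≥ 0`, and a minimal surface at `s = 0` (`ρ_s(0) = 0`) gives the Penrose inequality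
`M ≥ ρ(0)/2 = √(A/16π)` with `A = 4πρ(0)²`. -/
theorem spherically_symmetric_penrose_time_symmetric
    (ρ ρs ρss R m : ℝ → ℝ) (M : ℝ)
    (hρpos : ∀ s, 0 < ρ s)
    (hd1 : ∀ s, HasDerivAt ρ (ρs s) s)
    (hd2 : ∀ s, HasDerivAt ρs (ρss s) s)
    (hm : ∀ s, m s = (1 / 2) * ρ s * (1 - (ρs s) ^ 2))
    (hR : ∀ s, R s = 2 * ((ρ s) ^ 2)⁻¹ * (1 - 2 * ρ s * ρss s - (ρs s) ^ 2))
    (hRnonneg : ∀ s > (0 : ℝ), 0 ≤ R s)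
    (hρsnonneg : ∀ s > (0 : ℝ), 0 ≤ ρs s)
    (hmin : ρs 0 = 0)
    (hlim : Tendsto m atTop (nhds M)) :
    M ≥ ρ 0 / 2 ∧
      ρ 0 / 2 = Real.sqrt ((4 * Real.pi * (ρ 0) ^ 2) / (16 * Real.pi)) := by
  have hmeq : m = fun s => (1 / 2) * ρ s * (1 - (ρs s) ^ 2) := funext hm
  have hmderiv : ∀ s, HasDerivAt m
      ((1 / 2) * ρs s * (1 - (ρs s) ^ 2) + (1 / 2) * ρ s * (-(2 * ρs s * ρss s))) s := by
    intro s
    rw [hmeq]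
    have h1 : HasDerivAt (fun s => (1 / 2) * ρ s) ((1 / 2) * ρs s) s :=
      (hd1 s).const_mul _
    have h2 : HasDerivAt (fun s => 1 - (ρs s) ^ 2) (-(2 * ρs s * ρss s)) s := by
      have : HasDerivAt (fun x => 1 - ρs x ^ 2) (-((2:ℕ) * ρs s ^ (2 - 1) * ρss s)) s :=
        ((hd2 s).fun_pow 2).const_sub 1
      convert this using 1
      ring
    exact h1.mul h2
  -- derivative is nonneg on Ioi 0
  have hderiv_nonneg : ∀ s > (0 : ℝ),
      0 ≤ (1 / 2) * ρs s * (1 - (ρs s) ^ 2) + (1 / 2) * ρ s * (-(2 * ρs s * ρss s)) := by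
    intro s hs
    have hρ := hρpos s
    have key : (1 / 2) * ρs s * (1 - (ρs s) ^ 2) + (1 / 2) * ρ s * (-(2 * ρs s * ρss s))
        = (1 / 4) * ρs s * (ρ s) ^ 2 * R s := by
      rw [hR s]
      field_simp
      ring
    rw [key]
    have := hRnonneg s hs
    have := hρsnonneg s hs
    positivity
  have hmono : MonotoneOn m (Set.Ici (0 : ℝ)) := by
    apply monotoneOn_of_deriv_nonneg (convex_Ici 0)
    · exact fun s _ => ((hmderiv s).differentiableAt.continuousAt).continuousWithinAt
    · intro s hs
      exact (hmderiv s).differentiableAt.differentiableWithinAt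
    · intro s hs
      rw [interior_Ici] at hs
      rw [(hmderiv s).deriv]
      exact hderiv_nonneg s hs
  have hm0 : m 0 = ρ 0 / 2 := by rw [hm 0, hmin]; ring
  have hMge : M ≥ ρ 0 / 2 := by
    rw [← hm0]
    refine ge_of_tendsto hlim ?_
    filter_upwards [eventually_ge_atTop (0 : ℝ)] with s hs
    exact hmono Set.self_mem_Ici hs hs
  refine ⟨hMge, ?_⟩
  have hπ : (0:ℝ) < Real.pi := Real.pi_pos
  have : (4 * Real.pi * (ρ 0) ^ 2) / (16 * Real.pi) = (ρ 0 / 2) ^ 2 := by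
    field_simp
    ring
  have hρ0 := hρpos 0
  rw [this, Real.sqrt_sq (by linarith : (0:ℝ) ≤ ρ 0 / 2)]
end

section
/- In the spherically symmetric setting, with K the extension of k defined by K(∂_i,∂_j) = k_ij for 1 ≤ i,j ≤ 3, K(∂_i,∂_t) = 0, and k₄₄ = g¹¹φφ_r f_r / √(φ⁻² + g¹¹ f_r²), the trace of K over the graph Σ = {t=f(r)} with induced metric ḡ = g + φ²df² equals Tr_Σ K = (1−v²)k_a + 2k_b + √(g¹¹)(φ_r/φ)v³, where v = φ√(g¹¹)f_r/√(1+φ²g¹¹f_r²). -/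
/-- In spherical symmetry, with the extension `K` of `k` given by
`K(∂_i,∂_j) = k_ij`, `K(∂_i,∂_t) = 0` and `k₄₄ = g¹¹φφ_r f_r/√(φ⁻² + g¹¹f_r²)`,
the trace of `K` over the graph `Σ = {t = f(r)}` with induced metric `ḡ = g + φ²df²`,
namely `Tr_Σ K = ḡ^{ij}k_ij + ḡ^{ij}f_if_j k₄₄`, equals
`(1−v²)k_a + 2k_b + √(g¹¹)(φ_r/φ)v³`, where `v = φ√(g¹¹)f_r/√(1+φ²g¹¹f_r²)`. -/
theorem trace_extended_tensor_spherical
    (g11 ρ φ φr fr ka kb : ℝ)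
    (hg : 0 < g11) (hρ : 0 < ρ) (hφ : 0 < φ) :
    let ginv : ℝ := 1 / g11
    let gradsq : ℝ := ginv * fr ^ 2
    let fup : ℝ := ginv * fr
    let gbarrr : ℝ := ginv - fup ^ 2 / ((φ ^ 2)⁻¹ + gradsq)
    let k44 : ℝ := ginv * φ * φr * fr / Real.sqrt ((φ ^ 2)⁻¹ + gradsq)
    let v : ℝ := φ * Real.sqrt ginv * fr / Real.sqrt (1 + φ ^ 2 * ginv * fr ^ 2)
    gbarrr * (g11 * ka) + 2 * kb + gbarrr * fr ^ 2 * k44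
      = (1 - v ^ 2) * ka + 2 * kb + Real.sqrt ginv * (φr / φ) * v ^ 3 := by
  intro ginv gradsq fup gbarrr k44 v
  have hginv : 0 < ginv := by positivity
  have hA : 0 < (φ ^ 2)⁻¹ + gradsq := by positivity
  set A : ℝ := (φ ^ 2)⁻¹ + gradsq with hAdef
  have h1 : 1 + φ ^ 2 * ginv * fr ^ 2 = φ ^ 2 * A := by
    rw [hAdef]; show _ = φ ^ 2 * ((φ ^ 2)⁻¹ + ginv * fr ^ 2)
    field_simp
  have hsqrt1 : Real.sqrt (1 + φ ^ 2 * ginv * fr ^ 2) = φ * Real.sqrt A := by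
    rw [h1, Real.sqrt_mul (sq_nonneg φ), Real.sqrt_sq hφ.le]
  have hv : v = Real.sqrt ginv * fr / Real.sqrt A := by
    show φ * Real.sqrt ginv * fr / Real.sqrt (1 + φ ^ 2 * ginv * fr ^ 2) = _
    rw [hsqrt1]; field_simp
  set sA := Real.sqrt A with hsAdef
  set sg := Real.sqrt ginv with hsgdef
  have hsA : 0 < sA := Real.sqrt_pos.mpr hA
  have hsg : 0 < sg := Real.sqrt_pos.mpr hginv
  have hsA2 : sA ^ 2 = A := Real.sq_sqrt hA.le
  have hsg2 : sg ^ 2 = ginv := Real.sq_sqrt hginv.le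
  have hgbar : gbarrr = ginv - (ginv * fr) ^ 2 / A := rfl
  have hk44 : k44 = ginv * φ * φr * fr / sA := rfl
  rw [hgbar, hk44, hv]
  rw [← hsg2, ← hsA2]
  have h2 : φ ^ 2 * sA ^ 2 = 1 + sg ^ 2 * φ ^ 2 * fr ^ 2 := by
    rw [hsA2, hsg2, hAdef]; show φ ^ 2 * ((φ ^ 2)⁻¹ + ginv * fr ^ 2) = _
    field_simp
  have h3 : g11 * sg ^ 2 = 1 := by
    rw [hsg2]; show g11 * (1 / g11) = 1; field_simp
  field_simp
  linear_combination (φ * ka * sA * (sA ^ 2 - sg ^ 2 * fr ^ 2)) * h3 +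
    (sg ^ 4 * fr ^ 3 * φr) * h2
end

section
/- In the spherically symmetric setting with φ = ρ_s and v the solution of the generalized Jang equation, the radial component of the 1-form q satisfies q₁ = −2√(g₁₁)·(v/(1−v²))·(√(g¹¹)(ρ_r/ρ)v − k_b), and hence the boundary integrand is φ ḡ(q, n_ḡ) dσ_ḡ = ±(2ρ_r v/√(g₁₁))·(√(g¹¹)(ρ_r/ρ)v − k_b)·ρ² dσ. -/
set_option maxHeartbeats 2000000


/-- In spherical symmetry with `φ = ρ_s = √(1−v²)ρ_r/√(g₁₁)` and `v`
solving the generalized Jang equation (3.2), the radial component of the 1-form `q`,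
`q₁ = (φg¹¹f_r/√(1+φ²g¹¹f_r²))((f_{;rr} + 2(logφ)_rf_r)/√(φ⁻²+|∇f|²) − k_rr)`,
equals `−2√(g₁₁)(v/(1−v²))(√(g¹¹)(ρ_r/ρ)v − k_b)`, and the boundary integrand is
`φḡ(q,n_ḡ)dσ_ḡ = ±(2ρ_rv/√(g₁₁))(√(g¹¹)(ρ_r/ρ)v − k_b)ρ²dσ`. -/
theorem jang_boundary_integrand
    (g11 ρ v ka kb φ f q1fn : ℝ → ℝ) (r : ℝ)
    (hg : ∀ t, 0 < g11 t) (hρ : ∀ t, 0 < ρ t) (hρr : ∀ t, 0 < deriv ρ t)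
    (hv : ∀ t, |v t| < 1)
    (hdg : Differentiable ℝ g11) (hdρ : Differentiable ℝ ρ)
    (hdρ2 : Differentiable ℝ (deriv ρ)) (hdv : Differentiable ℝ v)
    (hdf : Differentiable ℝ f) (hdf2 : Differentiable ℝ (deriv f))
    (hφdef : ∀ t, φ t = Real.sqrt (1 - v t ^ 2) / Real.sqrt (g11 t) * deriv ρ t)
    -- v is the Jang slope of the graph t = f(r)
    (hvdef : ∀ t, v t = φ t * Real.sqrt (1 / g11 t) * deriv f t /
      Real.sqrt (1 + φ t ^ 2 * (1 / g11 t) * (deriv f t) ^ 2))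
    -- the generalized Jang equation (3.2)
    (hode : ∀ t, Real.sqrt (1 / g11 t) * deriv v t
        + 2 * (Real.sqrt (1 / g11 t) * (deriv ρ t / ρ t) * v t - kb t)
        + (v t ^ 2 - 1) * ka t
        + Real.sqrt (1 / g11 t) * v t * (deriv φ t / φ t) * (1 - v t ^ 2) = 0)
    -- definition of the radial component of q  (with k_rr = g₁₁k_a and
    -- f_{;rr} = f_rr − ½g¹¹g₁₁,_r f_r)
    (hq1 : ∀ t, q1fn t =
      (φ t * (1 / g11 t) * deriv f t /
          Real.sqrt (1 + φ t ^ 2 * (1 / g11 t) * (deriv f t) ^ 2)) *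
        ((deriv (deriv f) t - (1 / 2) * (1 / g11 t) * deriv g11 t * deriv f t
            + 2 * (deriv φ t / φ t) * deriv f t) /
            Real.sqrt ((φ t ^ 2)⁻¹ + (1 / g11 t) * (deriv f t) ^ 2)
          - g11 t * ka t)) :
    q1fn r = -2 * Real.sqrt (g11 r) * (v r / (1 - v r ^ 2)) *
        (Real.sqrt (1 / g11 r) * (deriv ρ r / ρ r) * v r - kb r) ∧
      (φ r * ((g11 r + φ r ^ 2 * (deriv f r) ^ 2)⁻¹ * q1fn r) *
          Real.sqrt (g11 r + φ r ^ 2 * (deriv f r) ^ 2) * ρ r ^ 2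
        = -(2 * deriv ρ r * v r / Real.sqrt (g11 r)) *
            (Real.sqrt (1 / g11 r) * (deriv ρ r / ρ r) * v r - kb r) * ρ r ^ 2
      ∨ φ r * ((g11 r + φ r ^ 2 * (deriv f r) ^ 2)⁻¹ * q1fn r) *
          Real.sqrt (g11 r + φ r ^ 2 * (deriv f r) ^ 2) * ρ r ^ 2
        = (2 * deriv ρ r * v r / Real.sqrt (g11 r)) *
            (Real.sqrt (1 / g11 r) * (deriv ρ r / ρ r) * v r - kb r) * ρ r ^ 2) := by
  -- positivity facts
  have hs : ∀ t, 0 < 1 - v t ^ 2 := fun t => by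
    have h := abs_lt.mp (hv t); nlinarith [h.1, h.2]
  have hS : ∀ t, 0 < Real.sqrt (1 - v t ^ 2) := fun t => Real.sqrt_pos.mpr (hs t)
  have hW : ∀ t, 0 < Real.sqrt (g11 t) := fun t => Real.sqrt_pos.mpr (hg t)
  have hφ : ∀ t, 0 < φ t := fun t => by
    rw [hφdef t]; exact mul_pos (div_pos (hS t) (hW t)) (hρr t)
  have hsw : ∀ t, Real.sqrt (1 / g11 t) = (Real.sqrt (g11 t))⁻¹ := fun t => by
    rw [one_div, Real.sqrt_inv]
  have hSsq : ∀ t, Real.sqrt (1 - v t ^ 2) ^ 2 = 1 - v t ^ 2 := fun t => Real.sq_sqrt (hs t).le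
  have hWsq : ∀ t, Real.sqrt (g11 t) ^ 2 = g11 t := fun t => Real.sq_sqrt (hg t).le
  -- the sqrt of 1 + φ²g¹¹f'²
  have h1v : ∀ t, 1 - v t ^ 2 = (1 + φ t ^ 2 * (1 / g11 t) * (deriv f t) ^ 2)⁻¹ := by
    intro t
    have hE : 0 ≤ φ t ^ 2 * (1 / g11 t) * (deriv f t) ^ 2 := by
      have := (hg t).le; positivity
    have hv2 : v t ^ 2 = (φ t ^ 2 * (1 / g11 t) * (deriv f t) ^ 2) /
        (1 + φ t ^ 2 * (1 / g11 t) * (deriv f t) ^ 2) := by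
      rw [hvdef t, div_pow, mul_pow, mul_pow,
        Real.sq_sqrt (le_of_lt (one_div_pos.mpr (hg t))),
        Real.sq_sqrt (by linarith : (0:ℝ) ≤ 1 + φ t ^ 2 * (1 / g11 t) * (deriv f t) ^ 2)]
    have hpos : (0:ℝ) < 1 + φ t ^ 2 * (1 / g11 t) * (deriv f t) ^ 2 := by linarith
    set E := φ t ^ 2 * (1 / g11 t) * (deriv f t) ^ 2 with hEdef
    rw [inv_eq_one_div, eq_div_iff hpos.ne', hv2]
    field_simp
    ring
  have hT : ∀ t, Real.sqrt (1 + φ t ^ 2 * (1 / g11 t) * (deriv f t) ^ 2)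
      = (Real.sqrt (1 - v t ^ 2))⁻¹ := by
    intro t
    rw [show (1:ℝ) + φ t ^ 2 * (1 / g11 t) * (deriv f t) ^ 2 = (1 - v t ^ 2)⁻¹ by
      rw [h1v t, inv_inv], Real.sqrt_inv]
  -- solve for deriv f
  have hf' : ∀ t, deriv f t = v t * Real.sqrt (g11 t) / (φ t * Real.sqrt (1 - v t ^ 2)) := by
    intro t
    have h := hvdef t
    rw [hsw t, hT t, div_inv_eq_mul] at h
    have h2 : v t * Real.sqrt (g11 t) = φ t * deriv f t * Real.sqrt (1 - v t ^ 2) := by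
      conv_lhs => rw [h]
      field_simp [(hW t).ne']
    rw [eq_div_iff (mul_pos (hφ t) (hS t)).ne']
    linear_combination -h2
  -- derivative facts at r
  have hv2d : HasDerivAt (fun t => 1 - v t ^ 2) (-(2 * v r * deriv v r)) r := by
    have h := (hasDerivAt_const r (1:ℝ)).fun_sub (((hdv r).hasDerivAt).fun_pow 2)
    refine h.congr_deriv ?_
    push_cast; ring
  have hsdva : HasDerivAt (fun t => Real.sqrt (1 - v t ^ 2))
      (-(2 * v r * deriv v r) / (2 * Real.sqrt (1 - v r ^ 2))) r :=
    hv2d.sqrt (hs r).ne'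
  have hwdva : HasDerivAt (fun t => Real.sqrt (g11 t))
      (deriv g11 r / (2 * Real.sqrt (g11 r))) r :=
    ((hdg r).hasDerivAt).sqrt (hg r).ne'
  have hφd : DifferentiableAt ℝ φ r := by
    rw [show φ = fun t => Real.sqrt (1 - v t ^ 2) / Real.sqrt (g11 t) * deriv ρ t from
      funext hφdef]
    exact ((hsdva.div hwdva (hW r).ne').mul ((hdρ2 r).hasDerivAt)).differentiableAt
  have hφdva : HasDerivAt φ (deriv φ r) r := hφd.hasDerivAt
  have hf'' : deriv (deriv f) r =
      ((deriv v r * Real.sqrt (g11 r) + v r * (deriv g11 r / (2 * Real.sqrt (g11 r)))) *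
          (φ r * Real.sqrt (1 - v r ^ 2)) -
        v r * Real.sqrt (g11 r) *
          (deriv φ r * Real.sqrt (1 - v r ^ 2) +
            φ r * (-(2 * v r * deriv v r) / (2 * Real.sqrt (1 - v r ^ 2))))) /
        (φ r * Real.sqrt (1 - v r ^ 2)) ^ 2 := by
    have hDf : deriv f = fun t => v t * Real.sqrt (g11 t) / (φ t * Real.sqrt (1 - v t ^ 2)) :=
      funext hf'
    rw [hDf]
    exact ((((hdv r).hasDerivAt.mul hwdva).div (hφdva.mul hsdva)
      (mul_pos (hφ r) (hS r)).ne')).deriv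
  have hV' : deriv v r =
      -(Real.sqrt (g11 r) * 2 * ((Real.sqrt (g11 r))⁻¹ * (deriv ρ r / ρ r) * v r - kb r))
        + Real.sqrt (g11 r) * ((1 - v r ^ 2) * ka r)
        - v r * (deriv φ r / φ r) * (1 - v r ^ 2) := by
    have h := hode r
    rw [hsw r] at h
    have hWne : Real.sqrt (g11 r) ≠ 0 := (hW r).ne'
    have hρne : ρ r ≠ 0 := (hρ r).ne'
    have hφne : φ r ≠ 0 := (hφ r).ne'
    field_simp at h ⊢
    linear_combination h
  have hU : Real.sqrt (1 - v r ^ 2) ^ 2 + v r ^ 2 = 1 := by rw [hSsq r]; ring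
  have hV'2 : deriv v r =
      (-(Real.sqrt (g11 r) * 2 * ((Real.sqrt (g11 r))⁻¹ * (deriv ρ r / ρ r) * v r - kb r))
        + Real.sqrt (g11 r) * (Real.sqrt (1 - v r ^ 2) ^ 2 * ka r)
        - v r * (deriv φ r / φ r) * Real.sqrt (1 - v r ^ 2) ^ 2)
      / (Real.sqrt (1 - v r ^ 2) ^ 2 + v r ^ 2) := by
    rw [hU, div_one, hSsq r, hV']
  -- sqrt simplification for the |∇f| term
  have hφsq : Real.sqrt ((φ r ^ 2)⁻¹ + 1 / g11 r * deriv f r ^ 2)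
      = (φ r * Real.sqrt (1 - v r ^ 2))⁻¹ := by
    have h : (φ r ^ 2)⁻¹ + 1 / g11 r * deriv f r ^ 2
        = ((φ r * Real.sqrt (1 - v r ^ 2))⁻¹) ^ 2 := by
      rw [hf' r]
      set W := Real.sqrt (g11 r) with hWdef
      set S := Real.sqrt (1 - v r ^ 2) with hSdef
      have hS2 : S ^ 2 = 1 - v r ^ 2 := hSsq r
      have hW0 : W ≠ 0 := (hW r).ne'
      have hS0 : S ≠ 0 := (hS r).ne'
      have hφ0 : φ r ≠ 0 := (hφ r).ne'
      rw [show g11 r = W ^ 2 from (hWsq r).symm]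
      field_simp
      linear_combination hS2
    rw [h, Real.sqrt_sq (inv_pos.mpr (mul_pos (hφ r) (hS r))).le]
  -- the key formula for q1
  have key : q1fn r = -2 * Real.sqrt (g11 r) * (v r / (1 - v r ^ 2)) *
      ((Real.sqrt (g11 r))⁻¹ * (deriv ρ r / ρ r) * v r - kb r) := by
    have h1 := hq1 r
    rw [hT r, hφsq] at h1
    rw [hf''] at h1
    rw [hf' r] at h1
    rw [hV'2] at h1
    rw [h1]
    set W := Real.sqrt (g11 r) with hWdef
    set S := Real.sqrt (1 - v r ^ 2) with hSdef
    have hS2 : S ^ 2 = 1 - v r ^ 2 := hSsq r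
    have hW0 : W ≠ 0 := (hW r).ne'
    have hS0 : S ≠ 0 := (hS r).ne'
    have hφ0 : φ r ≠ 0 := (hφ r).ne'
    have hρ0 : ρ r ≠ 0 := (hρ r).ne'
    have hU0 : S ^ 2 + v r ^ 2 ≠ 0 := by rw [hU]; exact one_ne_zero
    rw [show g11 r = W ^ 2 from (hWsq r).symm]
    rw [show (1:ℝ) - v r ^ 2 = S ^ 2 from hS2.symm]
    field_simp
    ring
  refine ⟨by rw [hsw r]; exact key, Or.inl ?_⟩
  have h2 : g11 r + φ r ^ 2 * deriv f r ^ 2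
      = (Real.sqrt (g11 r) / Real.sqrt (1 - v r ^ 2)) ^ 2 := by
    rw [hf' r]
    set W := Real.sqrt (g11 r) with hWdef
    set S := Real.sqrt (1 - v r ^ 2) with hSdef
    have hS2 : S ^ 2 = 1 - v r ^ 2 := hSsq r
    have hW0 : W ≠ 0 := (hW r).ne'
    have hS0 : S ≠ 0 := (hS r).ne'
    have hφ0 : φ r ≠ 0 := (hφ r).ne'
    rw [show g11 r = W ^ 2 from (hWsq r).symm]
    field_simp
    linear_combination hS2
  rw [hsw r, key, h2, Real.sqrt_sq (div_nonneg (hW r).le (hS r).le), hφdef r]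
  set W := Real.sqrt (g11 r) with hWdef
  set S := Real.sqrt (1 - v r ^ 2) with hSdef
  have hS2 : S ^ 2 = 1 - v r ^ 2 := hSsq r
  have hW0 : W ≠ 0 := (hW r).ne'
  have hS0 : S ≠ 0 := (hS r).ne'
  have hρ0 : ρ r ≠ 0 := (hρ r).ne'
  rw [show (1:ℝ) - v r ^ 2 = S ^ 2 from hS2.symm]
  field_simp
end
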